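/- For all n ≥ 6 divisible by 6, the graph Γ_n(∅, ∅, {0, n/3, n/2, 2n/3}) is non-planar; indeed, the induced subgraph on vertices v_0, v_{n/3}, v_{2n/3}, v'_0, v'_{n/3}, v'_{2n/3} is isomorphic to K_{3,3}. -/

import Mathlib

/-- The circulant graph `circ_n(S)`: vertices `ZMod n`, with `i` adjacent to `i + s` for `s ∈ S`. -/
def circGraph (n : ℕ) (S : Finset ℕ) : SimpleGraph (ZMod n) :=
  SimpleGraph.fromRel (fun i j => ∃ s ∈ S, j = i + (s : ZMod n))

/-- The graph `Γ_n(A,B,Q)` with vertices `v_i = Sum.inl i`, `v'_i = Sum.inr i`, and edges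
`(v_i, v_{i+a})` for `a ∈ A`, `(v'_i, v'_{i+b})` for `b ∈ B`, `(v_i, v'_{i+q})` for `q ∈ Q`. -/
def Gamma (n : ℕ) (A B Q : Finset ℕ) : SimpleGraph (ZMod n ⊕ ZMod n) :=
  SimpleGraph.fromRel (fun x y =>
    match x, y with
    | Sum.inl i, Sum.inl j => ∃ a ∈ A, j = i + (a : ZMod n)
    | Sum.inr i, Sum.inr j => ∃ b ∈ B, j = i + (b : ZMod n)
    | Sum.inl i, Sum.inr j => ∃ q ∈ Q, j = i + (q : ZMod n)
    | Sum.inr _, Sum.inl _ => False)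

/-- `H` is a minor of `G`: there are disjoint connected branch sets in `G`, one for each
vertex of `H`, such that adjacent vertices of `H` have adjacent branch sets. -/
def SimpleGraph.IsMinorOf {W V : Type*} (H : SimpleGraph W) (G : SimpleGraph V) : Prop :=
  ∃ f : V → Option W,
    (∀ w : W, (G.induce {v | f v = some w}).Connected) ∧
    (∀ w₁ w₂ : W, H.Adj w₁ w₂ →
      ∃ v₁ v₂, f v₁ = some w₁ ∧ f v₂ = some w₂ ∧ G.Adj v₁ v₂)

/-- A graph is planar iff it has no `K₅` minor and no `K_{3,3}` minor (Wagner's theorem). -/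
def SimpleGraph.Planar {V : Type*} (G : SimpleGraph V) : Prop :=
  ¬ (⊤ : SimpleGraph (Fin 5)).IsMinorOf G ∧
  ¬ (completeBipartiteGraph (Fin 3) (Fin 3)).IsMinorOf G

/-- `Γ_n(A,B,Q)` is properly given: `a₁ ≢ ±a₂ (mod n)` for distinct `a₁, a₂ ∈ A`,
and similarly for `B`. -/
def ProperlyGiven (n : ℕ) (A B : Finset ℕ) : Prop :=
  (∀ a₁ ∈ A, ∀ a₂ ∈ A, a₁ ≠ a₂ →
    (a₁ : ZMod n) ≠ (a₂ : ZMod n) ∧ (a₁ : ZMod n) ≠ -(a₂ : ZMod n)) ∧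
  (∀ b₁ ∈ B, ∀ b₂ ∈ B, b₁ ≠ b₂ →
    (b₁ : ZMod n) ≠ (b₂ : ZMod n) ∧ (b₁ : ZMod n) ≠ -(b₂ : ZMod n))

/-- `circ_n(S)` is properly given: `s ≢ ±t (mod n)` for distinct `s, t ∈ S`. -/
def ProperlyGivenS (n : ℕ) (S : Finset ℕ) : Prop :=
  ∀ s ∈ S, ∀ t ∈ S, s ≠ t →
    (s : ZMod n) ≠ (t : ZMod n) ∧ (s : ZMod n) ≠ -(t : ZMod n)

/-- A permutation is regular of order `n`: all its cycles have length exactly `n`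
(for `n = 1` this means the identity). -/
def IsRegularOfOrder {α : Type*} (f : Equiv.Perm α) (n : ℕ) : Prop :=
  f ^ n = 1 ∧ ∀ x : α, ∀ k : ℕ, 0 < k → k < n → (f ^ k) x ≠ x

def tt (k : ℕ) : Fin 3 → ZMod (6*k) := fun i => ((2 * k * i.val : ℕ) : ZMod (6*k))

lemma cast_ne (k a b : ℕ) (ha : a < 6*k) (hb : b < 6*k) (hab : a ≠ b) :
    ((a : ℕ) : ZMod (6*k)) ≠ ((b : ℕ) : ZMod (6*k)) := by
  intro h
  rw [ZMod.natCast_eq_natCast_iff, Nat.ModEq, Nat.mod_eq_of_lt ha, Nat.mod_eq_of_lt hb] at h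
  exact hab h

lemma tt_inj (k : ℕ) (hk : 1 ≤ k) : Function.Injective (tt k) := by
  intro i j h
  fin_cases i <;> fin_cases j <;>
    first
    | rfl
    | exact absurd h (cast_ne k (2*k*0) (2*k*1) (by omega) (by omega) (by omega))
    | exact absurd h (cast_ne k (2*k*0) (2*k*2) (by omega) (by omega) (by omega))
    | exact absurd h (cast_ne k (2*k*1) (2*k*0) (by omega) (by omega) (by omega))
    | exact absurd h (cast_ne k (2*k*1) (2*k*2) (by omega) (by omega) (by omega))
    | exact absurd h (cast_ne k (2*k*2) (2*k*0) (by omega) (by omega) (by omega))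
    | exact absurd h (cast_ne k (2*k*2) (2*k*1) (by omega) (by omega) (by omega))

lemma key (k a b q : ℕ) (hq : q ∈ ({0, 2*k, 3*k, 4*k} : Finset ℕ)) (h1 : b ≤ a + q)
    (c : ℕ) (h2 : a + q - b = 6 * k * c) :
    ∃ q' ∈ ({0, 2*k, 3*k, 4*k} : Finset ℕ),
      ((b : ℕ) : ZMod (6*k)) = ((a : ℕ) : ZMod (6*k)) + ((q' : ℕ) : ZMod (6*k)) :=
  ⟨q, hq, by
    rw [← Nat.cast_add, ZMod.natCast_eq_natCast_iff]
    exact (Nat.modEq_iff_dvd' h1).mpr ⟨c, h2⟩⟩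

lemma adj_lr (k : ℕ) (i j : Fin 3) :
    (Gamma (6*k) ∅ ∅ {0, 2*k, 3*k, 4*k}).Adj (Sum.inl (tt k i)) (Sum.inr (tt k j)) := by
  rw [Gamma, SimpleGraph.fromRel_adj]
  refine ⟨by simp, Or.inl ?_⟩
  show ∃ q ∈ ({0, 2*k, 3*k, 4*k} : Finset ℕ),
    ((2 * k * j.val : ℕ) : ZMod (6*k)) = ((2 * k * i.val : ℕ) : ZMod (6*k)) + (q : ZMod (6*k))
  fin_cases i <;> fin_cases j <;> simp only [Fin.isValue, Fin.val_zero, Fin.val_one, Fin.val_two]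
  · exact key k (2*k*0) (2*k*0) 0 (by simp) (by omega) 0 (by omega)
  · exact key k (2*k*0) (2*k*1) (2*k) (by simp) (by omega) 0 (by omega)
  · exact key k (2*k*0) (2*k*2) (4*k) (by simp) (by omega) 0 (by omega)
  · exact key k (2*k*1) (2*k*0) (4*k) (by simp) (by omega) 1 (by omega)
  · exact key k (2*k*1) (2*k*1) 0 (by simp) (by omega) 0 (by omega)
  · exact key k (2*k*1) (2*k*2) (2*k) (by simp) (by omega) 0 (by omega)
  · exact key k (2*k*2) (2*k*0) (2*k) (by simp) (by omega) 1 (by omega)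
  · exact key k (2*k*2) (2*k*1) (4*k) (by simp) (by omega) 1 (by omega)
  · exact key k (2*k*2) (2*k*2) 0 (by simp) (by omega) 0 (by omega)

lemma nadj_ll (n : ℕ) (Q : Finset ℕ) (x y : ZMod n) :
    ¬ (Gamma n ∅ ∅ Q).Adj (Sum.inl x) (Sum.inl y) := by
  simp [Gamma, SimpleGraph.fromRel_adj]

lemma nadj_rr (n : ℕ) (Q : Finset ℕ) (x y : ZMod n) :
    ¬ (Gamma n ∅ ∅ Q).Adj (Sum.inr x) (Sum.inr y) := by
  simp [Gamma, SimpleGraph.fromRel_adj]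

theorem stmt10 (n : ℕ) (hn : 6 ≤ n) (h6 : 6 ∣ n) :
    ¬ (Gamma n ∅ ∅ {0, n / 3, n / 2, 2 * n / 3}).Planar ∧
    Nonempty (((Gamma n ∅ ∅ {0, n / 3, n / 2, 2 * n / 3}).induce
        {Sum.inl (0 : ZMod n), Sum.inl ((n / 3 : ℕ) : ZMod n), Sum.inl ((2 * n / 3 : ℕ) : ZMod n),
         Sum.inr (0 : ZMod n), Sum.inr ((n / 3 : ℕ) : ZMod n), Sum.inr ((2 * n / 3 : ℕ) : ZMod n)})
      ≃g completeBipartiteGraph (Fin 3) (Fin 3)) := by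
  obtain ⟨k, rfl⟩ := h6
  have hk : 1 ≤ k := by omega
  rw [show 6 * k / 3 = 2 * k from by omega, show 6 * k / 2 = 3 * k from by omega,
    show 2 * (6 * k) / 3 = 4 * k from by omega]
  set G := Gamma (6*k) ∅ ∅ {0, 2*k, 3*k, 4*k} with hG
  have h2k0 : ((2*k*1 : ℕ) : ZMod (6*k)) = ((2*k : ℕ) : ZMod (6*k)) := by norm_num
  have h4k0 : ((2*k*2 : ℕ) : ZMod (6*k)) = ((4*k : ℕ) : ZMod (6*k)) := by
    congr 1; ring
  have h00 : ((2*k*0 : ℕ) : ZMod (6*k)) = (0 : ZMod (6*k)) := by norm_num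
  set F : Fin 3 ⊕ Fin 3 → (ZMod (6*k) ⊕ ZMod (6*k)) := Sum.map (tt k) (tt k) with hF
  set V : Set (ZMod (6*k) ⊕ ZMod (6*k)) :=
    {Sum.inl (0 : ZMod (6*k)), Sum.inl ((2*k : ℕ) : ZMod (6*k)), Sum.inl ((4*k : ℕ) : ZMod (6*k)),
     Sum.inr (0 : ZMod (6*k)), Sum.inr ((2*k : ℕ) : ZMod (6*k)), Sum.inr ((4*k : ℕ) : ZMod (6*k))}
    with hV
  have hFinj : Function.Injective F := (tt_inj k hk).sumMap (tt_inj k hk)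
  have hmem : ∀ x, F x ∈ V := by
    rintro (i | i) <;> fin_cases i <;>
      simp only [hF, Sum.map_inl, Sum.map_inr, tt, Fin.val_zero, Fin.val_one, Fin.val_two,
        h2k0, h4k0, h00, hV] <;>
      simp [Set.mem_insert_iff]
  have hadj : ∀ x y : Fin 3 ⊕ Fin 3,
      G.Adj (F x) (F y) ↔ (completeBipartiteGraph (Fin 3) (Fin 3)).Adj x y := by
    rintro (i | i) (j | j)
    · exact iff_of_false (nadj_ll _ _ _ _) (by simp)
    · exact iff_of_true (adj_lr k i j) (by simp)
    · exact iff_of_true (adj_lr k j i).symm (by simp)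
    · exact iff_of_false (nadj_rr _ _ _ _) (by simp)
  constructor
  · -- non-planar
    rintro ⟨-, h33⟩
    apply h33
    classical
    refine ⟨fun v => if h : ∃ w, F w = v then some h.choose else none, ?_, ?_⟩
    · intro w
      have hset : {v | (if h : ∃ w', F w' = v then some h.choose else none) = some w}
          = {F w} := by
        ext v
        simp only [Set.mem_setOf_eq, Set.mem_singleton_iff]
        constructor
        · intro hv
          split at hv
          · next h => rw [← h.choose_spec, Option.some_inj.mp hv]
          · exact absurd hv (by simp)
        · rintro rfl
          rw [dif_pos ⟨w, rfl⟩]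
          exact congrArg some (hFinj (⟨w, rfl⟩ : ∃ w', F w' = F w).choose_spec)
      rw [hset]
      have hne : Nonempty ({F w} : Set _) := ⟨⟨F w, rfl⟩⟩
      refine SimpleGraph.Connected.mk ?_
      intro a b
      have hab : a = b := Subtype.ext ((a.2 : (a : _) = F w).trans ((b.2 : (b : _) = F w)).symm)
      exact hab ▸ SimpleGraph.Reachable.refl a
    · intro w₁ w₂ h12
      have hfw : ∀ w : Fin 3 ⊕ Fin 3,
          (if h : ∃ w', F w' = F w then some h.choose else none) = some w := by
        intro w
        rw [dif_pos (⟨w, rfl⟩ : ∃ w', F w' = F w)]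
        exact congrArg some (hFinj (⟨w, rfl⟩ : ∃ w', F w' = F w).choose_spec)
      exact ⟨F w₁, F w₂, hfw w₁, hfw w₂, (hadj w₁ w₂).mpr h12⟩
  · -- isomorphism
    have hFbij : Function.Bijective (fun x => (⟨F x, hmem x⟩ : V)) := by
      constructor
      · intro a b h
        exact hFinj (congrArg Subtype.val h)
      · rintro ⟨v, hv⟩
        simp only [hV, Set.mem_insert_iff, Set.mem_singleton_iff] at hv
        rcases hv with rfl | rfl | rfl | rfl | rfl | rfl
        · exact ⟨Sum.inl 0, Subtype.ext (by simp [hF, tt])⟩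
        · exact ⟨Sum.inl 1, Subtype.ext (by simp [hF, tt])⟩
        · exact ⟨Sum.inl 2, Subtype.ext (by simp only [hF, Sum.map_inl, tt, Fin.val_two]; rw [h4k0])⟩
        · exact ⟨Sum.inr 0, Subtype.ext (by simp [hF, tt])⟩
        · exact ⟨Sum.inr 1, Subtype.ext (by simp [hF, tt])⟩
        · exact ⟨Sum.inr 2, Subtype.ext (by simp only [hF, Sum.map_inr, tt, Fin.val_two]; rw [h4k0])⟩
    refine ⟨(⟨Equiv.ofBijective _ hFbij, ?_⟩ :
      completeBipartiteGraph (Fin 3) (Fin 3) ≃g G.induce V).symm⟩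
    intro a b
    exact hadj a b
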